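/- For every integer p ≥ 1 and every ε > 0 there exists N such that for all n ≥ N: if G is a C5-free simple graph on n vertices with e_p(G) = ex_p(n, C_5) (i.e., G maximizes e_p among C5-free graphs on n vertices), then the maximum degree of G satisfies Δ(G) ≥ (1/2 - ε)·n. -/

import Mathlib

/-- A graph is `C5`-free if it contains no cycle of length 5 as a subgraph. -/
def C5Free {V : Type*} (G : SimpleGraph V) : Prop :=
  ¬ ∃ v : Fin 5 → V, Function.Injective v ∧ ∀ i : Fin 5, G.Adj (v i) (v (i + 1))

/-- The sum of the `p`-th powers of the degrees of a finite graph. -/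
noncomputable def ep {V : Type*} [Fintype V] (G : SimpleGraph V) (p : ℕ) : ℕ :=
  letI : DecidableRel G.Adj := fun _ _ => Classical.dec _
  ∑ v, G.degree v ^ p

/-- `exP n p` is the maximum of `ep G p` over all `C5`-free graphs on `n` vertices. -/
noncomputable def exP (n p : ℕ) : ℕ :=
  sSup {m | ∃ G : SimpleGraph (Fin n), C5Free G ∧ ep G p = m}

/-- The maximum degree of a finite graph. -/
noncomputable def maxDeg {V : Type*} [Fintype V] (G : SimpleGraph V) : ℕ :=
  letI : DecidableRel G.Adj := fun _ _ => Classical.dec _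
  G.maxDegree

open Finset SimpleGraph

private lemma no5 : ∀ g : Fin 5 → Bool, ¬ ∀ i : Fin 5, g i ≠ g (i + 1) := by decide

/-- The complete bipartite graph with parts `{u | u.val < n/2}` and the rest. -/
def bip (n : ℕ) : SimpleGraph (Fin n) where
  Adj u v := decide (u.val < n / 2) ≠ decide (v.val < n / 2)
  symm := ⟨fun u v h => h.symm⟩
  loopless := ⟨fun v h => h rfl⟩

lemma bip_c5free (n : ℕ) : C5Free (bip n) := by
  rintro ⟨v, -, hadj⟩
  exact no5 (fun i => decide ((v i).val < n / 2)) (fun i => hadj i)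

lemma bip_degree (n : ℕ) (hn : 1 ≤ n) (v : Fin n) :
    letI : DecidableRel (bip n).Adj := fun _ _ => Classical.dec _
    n / 2 ≤ (bip n).degree v := by
  letI : DecidableRel (bip n).Adj := fun _ _ => Classical.dec _
  have hdn : n / 2 < n := by omega
  set b : Fin n := ⟨n / 2, hdn⟩ with hb
  have hIio : (univ.filter fun u : Fin n => u.val < n / 2).card = n / 2 := by
    have : (univ.filter fun u : Fin n => u.val < n / 2) = Finset.Iio b := by
      ext u; simp only [Finset.mem_filter, Finset.mem_univ, true_and, Finset.mem_Iio]; exact Iff.rfl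
    rw [this, Fin.card_Iio]
  have hcompl : (univ.filter fun u : Fin n => ¬ u.val < n / 2).card = n - n / 2 := by
    have h2 := Finset.card_filter_add_card_filter_not
      (s := (univ : Finset (Fin n))) (p := fun u : Fin n => u.val < n / 2)
    simp only [Finset.card_univ, Fintype.card_fin] at h2
    omega
  have hdeg : (bip n).degree v
      = (univ.filter fun u : Fin n => (bip n).Adj v u).card := by
    rw [SimpleGraph.degree]
    congr 1
    ext u
    simp [SimpleGraph.mem_neighborFinset]
  rw [hdeg]
  by_cases hv : v.val < n / 2
  · have : (univ.filter fun u : Fin n => (bip n).Adj v u)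
        = (univ.filter fun u : Fin n => ¬ u.val < n / 2) := by
      ext u
      simp only [Finset.mem_filter, Finset.mem_univ, true_and]
      show (decide (v.val < n / 2) ≠ decide (u.val < n / 2)) ↔ _
      simp [hv]
    rw [this, hcompl]; omega
  · have : (univ.filter fun u : Fin n => (bip n).Adj v u)
        = (univ.filter fun u : Fin n => u.val < n / 2) := by
      ext u
      simp only [Finset.mem_filter, Finset.mem_univ, true_and]
      show (decide (v.val < n / 2) ≠ decide (u.val < n / 2)) ↔ _
      simp [hv]
    rw [this, hIio]

lemma ep_bip_ge (n p : ℕ) (hn : 1 ≤ n) : n * (n / 2) ^ p ≤ ep (bip n) p := by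
  rw [ep]
  calc n * (n / 2) ^ p = ∑ _v : Fin n, (n / 2) ^ p := by
        rw [Finset.sum_const, Finset.card_univ, Fintype.card_fin, smul_eq_mul]
    _ ≤ _ := Finset.sum_le_sum fun v _ =>
        Nat.pow_le_pow_left (bip_degree n hn v) p

lemma ep_le (n p : ℕ) (G : SimpleGraph (Fin n)) : ep G p ≤ n * maxDeg G ^ p := by
  letI : DecidableRel G.Adj := fun _ _ => Classical.dec _
  rw [ep, maxDeg]
  calc (∑ v, G.degree v ^ p) ≤ ∑ _v : Fin n, G.maxDegree ^ p :=
        Finset.sum_le_sum fun v _ => Nat.pow_le_pow_left (G.degree_le_maxDegree v) p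
    _ = n * G.maxDegree ^ p := by
        rw [Finset.sum_const, Finset.card_univ, Fintype.card_fin, smul_eq_mul]

lemma exP_ge (n p : ℕ) (hn : 1 ≤ n) : n * (n / 2) ^ p ≤ exP n p := by
  have hbdd : BddAbove {m | ∃ G : SimpleGraph (Fin n), C5Free G ∧ ep G p = m} := by
    refine ⟨n * (n - 1) ^ p, ?_⟩
    rintro m ⟨G, -, rfl⟩
    letI : DecidableRel G.Adj := fun _ _ => Classical.dec _
    rw [ep]
    calc (∑ v, G.degree v ^ p) ≤ ∑ _v : Fin n, (n - 1) ^ p := by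
          refine Finset.sum_le_sum fun v _ => Nat.pow_le_pow_left ?_ p
          have := G.degree_lt_card_verts v
          simp only [Fintype.card_fin] at this
          omega
      _ = n * (n - 1) ^ p := by
          rw [Finset.sum_const, Finset.card_univ, Fintype.card_fin, smul_eq_mul]
  calc n * (n / 2) ^ p ≤ ep (bip n) p := ep_bip_ge n p hn
    _ ≤ exP n p := le_csSup hbdd ⟨bip n, bip_c5free n, rfl⟩

theorem stmt2 (p : ℕ) (hp : 1 ≤ p) (ε : ℝ) (hε : 0 < ε) :
    ∃ N : ℕ, ∀ n : ℕ, N ≤ n → ∀ G : SimpleGraph (Fin n), C5Free G →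
      ep G p = exP n p → (1/2 - ε) * (n : ℝ) ≤ (maxDeg G : ℝ) := by
  refine ⟨⌈1 / ε⌉₊ + 1, fun n hn G _ hmax => ?_⟩
  have hn1 : 1 ≤ n := by omega
  -- From extremality: n * (n/2)^p ≤ n * (maxDeg G)^p
  have h1 : n * (n / 2) ^ p ≤ n * maxDeg G ^ p := by
    calc n * (n / 2) ^ p ≤ exP n p := exP_ge n p hn1
      _ = ep G p := hmax.symm
      _ ≤ n * maxDeg G ^ p := ep_le n p G
  have h2 : (n / 2) ^ p ≤ maxDeg G ^ p := Nat.le_of_mul_le_mul_left h1 (by omega)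
  have h3 : n / 2 ≤ maxDeg G := by
    by_contra h
    exact absurd h2 (not_le.mpr (Nat.pow_lt_pow_left (by omega) (by omega)))
  -- Real arithmetic: ε * n ≥ 1, and (n/2 : ℕ) ≥ (n - 1)/2 as reals
  have hεn : 1 ≤ ε * n := by
    have h4 : (1 / ε : ℝ) ≤ ⌈1 / ε⌉₊ := Nat.le_ceil _
    have h5 : ((⌈1 / ε⌉₊ : ℝ) + 1) ≤ n := by
      have : (⌈1 / ε⌉₊ + 1 : ℕ) ≤ n := hn
      exact_mod_cast this
    have h6 : (1 / ε : ℝ) ≤ n := by linarith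
    rw [div_le_iff₀ hε] at h6
    linarith
  have hfloor : ((n : ℝ) - 1) / 2 ≤ ((n / 2 : ℕ) : ℝ) := by
    have h : n ≤ 2 * (n / 2) + 1 := by omega
    have h' := (Nat.cast_le (α := ℝ)).mpr h
    push_cast at h'
    linarith
  have hmd : ((n / 2 : ℕ) : ℝ) ≤ (maxDeg G : ℝ) := by exact_mod_cast h3
  nlinarith [hε.le, (Nat.cast_nonneg n : (0:ℝ) ≤ n)]
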